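/- Fix λ, μ > 0 and p > 0. With a, b the roots as functions of λᵢ (a > b, both negative, a+b = −(λ+μ), ab = λᵢμ), define Q(λᵢ) := e^{−(λ+μ)p} + (λ+μ)/(a−b)·(e^{ap} − e^{bp}). Then Q is strictly decreasing in λᵢ on the interval where (λ+μ)² > 4λᵢμ. -/

import Mathlib

noncomputable def PP (lam mu p li : ℝ) : ℝ :=
  let D := Real.sqrt ((lam + mu)^2 - 4 * li * mu)
  let a := (-(lam + mu) + D)/2
  let b := (-(lam + mu) - D)/2
  Real.exp (-(lam + mu) * p) + (lam + mu) / (a - b) * (Real.exp (a * p) - Real.exp (b * p))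

lemma sinh_lt_mul_cosh {x : ℝ} (hx : 0 < x) : Real.sinh x < x * Real.cosh x := by
  have hmono : StrictMonoOn (fun y : ℝ => y * Real.cosh y - Real.sinh y) (Set.Ici 0) := by
    apply strictMonoOn_of_deriv_pos (convex_Ici 0)
    · fun_prop
    · intro y hy
      rw [interior_Ici] at hy
      have hd : HasDerivAt (fun y : ℝ => y * Real.cosh y - Real.sinh y)
          (1 * Real.cosh y + y * Real.sinh y - Real.cosh y) y :=
        ((hasDerivAt_id y).mul (Real.hasDerivAt_cosh y)).sub (Real.hasDerivAt_sinh y)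
      rw [hd.deriv]
      have h2 := mul_pos hy (Real.sinh_pos_iff.2 hy)
      linarith
  have := hmono (Set.self_mem_Ici) (Set.mem_Ici.2 hx.le) hx
  simp at this
  linarith

lemma sinh_div_strictMono : StrictMonoOn (fun x : ℝ => Real.sinh x / x) (Set.Ioi 0) := by
  apply strictMonoOn_of_deriv_pos (convex_Ioi 0)
  · apply ContinuousOn.div (by fun_prop) (by fun_prop)
    intro y hy; exact ne_of_gt hy
  · intro y hy
    rw [interior_Ioi] at hy
    have hy0 : (y:ℝ) ≠ 0 := ne_of_gt hy
    have hd : HasDerivAt (fun x : ℝ => Real.sinh x / x)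
        ((Real.cosh y * y - Real.sinh y * 1) / y ^ 2) y :=
      (Real.hasDerivAt_sinh y).div (hasDerivAt_id y) hy0
    rw [hd.deriv]
    have h := sinh_lt_mul_cosh hy
    have : 0 < y ^ 2 := by positivity
    apply div_pos _ this
    nlinarith

lemma PP_eq (lam mu p li : ℝ) (hp : 0 < p)
    (hD : 0 < Real.sqrt ((lam + mu)^2 - 4 * li * mu)) :
    PP lam mu p li = Real.exp (-(lam + mu) * p) +
      (lam + mu) * p * Real.exp (-((lam + mu) * p) / 2) *
      (Real.sinh (Real.sqrt ((lam + mu)^2 - 4 * li * mu) * p / 2) /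
        (Real.sqrt ((lam + mu)^2 - 4 * li * mu) * p / 2)) := by
  set D := Real.sqrt ((lam + mu)^2 - 4 * li * mu) with hDdef
  have hDne : D ≠ 0 := ne_of_gt hD
  have hpne : p ≠ 0 := ne_of_gt hp
  show Real.exp (-(lam + mu) * p) + (lam + mu) /
      ((-(lam + mu) + D)/2 - (-(lam + mu) - D)/2) *
      (Real.exp (((-(lam + mu) + D)/2) * p) - Real.exp (((-(lam + mu) - D)/2) * p)) = _
  have hab : ((-(lam + mu) + D)/2) - ((-(lam + mu) - D)/2) = D := by ring
  rw [hab]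
  have h1 : ((-(lam + mu) + D)/2) * p = (-((lam + mu) * p) / 2) + D * p / 2 := by ring
  have h2 : ((-(lam + mu) - D)/2) * p = (-((lam + mu) * p) / 2) + (-(D * p / 2)) := by ring
  rw [h1, h2, Real.exp_add, Real.exp_add, Real.sinh_eq]
  have hexp : Real.exp (-(D * p / 2)) = 1 / Real.exp (D * p / 2) := by
    rw [Real.exp_neg]; ring
  rw [hexp]
  have he : Real.exp (D * p / 2) ≠ 0 := Real.exp_ne_zero _
  field_simp

theorem PP_strictAnti (lam mu p : ℝ) (hlam : 0 < lam) (hmu : 0 < mu) (hp : 0 < p) :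
    StrictAntiOn (PP lam mu p)
      {li | li ∈ Set.Ioc 0 lam ∧ 4 * li * mu < (lam + mu)^2} := by
  intro l1 h1 l2 h2 hlt
  obtain ⟨⟨hl1pos, _⟩, hl1⟩ := h1
  obtain ⟨⟨hl2pos, _⟩, hl2⟩ := h2
  set D1 := Real.sqrt ((lam + mu)^2 - 4 * l1 * mu) with hD1
  set D2 := Real.sqrt ((lam + mu)^2 - 4 * l2 * mu) with hD2
  have harg2 : 0 < (lam + mu)^2 - 4 * l2 * mu := by linarith
  have harg1 : 0 < (lam + mu)^2 - 4 * l1 * mu := by nlinarith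
  have hD1pos : 0 < D1 := Real.sqrt_pos.2 harg1
  have hD2pos : 0 < D2 := Real.sqrt_pos.2 harg2
  have hDlt : D2 < D1 := by
    apply Real.sqrt_lt_sqrt harg2.le
    nlinarith
  rw [PP_eq lam mu p l1 hp hD1pos, PP_eq lam mu p l2 hp hD2pos]
  have hx1 : D1 * p / 2 ∈ Set.Ioi (0:ℝ) := by
    simp only [Set.mem_Ioi]; positivity
  have hx2 : D2 * p / 2 ∈ Set.Ioi (0:ℝ) := by
    simp only [Set.mem_Ioi]; positivity
  have hxlt : D2 * p / 2 < D1 * p / 2 := by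
    have := mul_lt_mul_of_pos_right hDlt hp
    linarith
  have hg := sinh_div_strictMono hx2 hx1 hxlt
  have hC : 0 < (lam + mu) * p * Real.exp (-((lam + mu) * p) / 2) := by
    have := Real.exp_pos (-((lam + mu) * p) / 2)
    positivity
  have key := mul_lt_mul_of_pos_left hg hC
  dsimp only at key
  rw [← hD1, ← hD2]
  linarith
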